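/- Let (Ω, μ) be a probability space, let σ : Ω → Ω be an ergodic measure-preserving transformation, let A ⊆ Ω be a measurable set, and let e₁ be a real number with 0 < e₁ < 1/2. Then for μ-almost every ω ∈ Ω, the proportion (1/N) · #{ n ∈ ℕ : e₁·N ≤ n ≤ (1−e₁)·N and σⁿ(ω) ∈ A } converges to (1 − 2e₁) · μ(A) as N → ∞. -/

import Mathlib

open MeasureTheory Filter

set_option linter.unusedSectionVars false

section Birkhoff

variable {Ω : Type*} [MeasurableSpace Ω]

/-- `maxS σ f n ω = max (0, S₁ ω, …, Sₙ ω)` where `Sₖ` is the Birkhoff sum. -/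
def maxS (σ : Ω → Ω) (f : Ω → ℝ) : ℕ → Ω → ℝ
  | 0 => fun _ => 0
  | n + 1 => fun ω => max (maxS σ f n ω) (birkhoffSum σ f (n + 1) ω)

variable {σ : Ω → Ω} {f : Ω → ℝ}

lemma maxS_nonneg (n : ℕ) (ω : Ω) : 0 ≤ maxS σ f n ω := by
  induction n with
  | zero => simp [maxS]
  | succ n ih => exact le_trans ih (le_max_left _ _)

lemma maxS_mono {n m : ℕ} (h : n ≤ m) (ω : Ω) : maxS σ f n ω ≤ maxS σ f m ω := by
  induction m with
  | zero => simp_all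
  | succ m ih =>
    rcases Nat.eq_or_lt_of_le h with rfl | h'
    · exact le_rfl
    · exact le_trans (ih (Nat.lt_succ_iff.mp h')) (le_max_left _ _)

lemma birkhoffSum_le_maxS {k n : ℕ} (h : k ≤ n) (ω : Ω) :
    birkhoffSum σ f k ω ≤ maxS σ f n ω := by
  rcases Nat.eq_zero_or_pos k with rfl | hk
  · simpa [birkhoffSum_zero] using maxS_nonneg n ω
  · obtain ⟨k, rfl⟩ := Nat.exists_eq_add_of_lt hk
    refine le_trans ?_ (maxS_mono h ω)
    simp only [maxS, zero_add]
    exact le_max_right _ _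

lemma maxS_cases (n : ℕ) (ω : Ω) :
    maxS σ f n ω = 0 ∨ ∃ k, 1 ≤ k ∧ k ≤ n ∧ maxS σ f n ω = birkhoffSum σ f k ω := by
  induction n with
  | zero => exact Or.inl rfl
  | succ n ih =>
    rcases max_choice (maxS σ f n ω) (birkhoffSum σ f (n + 1) ω) with h | h
    · rcases ih with h0 | ⟨k, hk1, hkn, hke⟩
      · exact Or.inl (by simpa [maxS, h] using h0)
      · exact Or.inr ⟨k, hk1, hkn.trans (Nat.le_succ n), by simpa [maxS, h] using hke⟩
    · exact Or.inr ⟨n + 1, Nat.succ_le_succ (Nat.zero_le n), le_rfl, by simpa [maxS] using h⟩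

lemma maxS_measurable (hσ : Measurable σ) (hf : Measurable f) (n : ℕ) :
    Measurable (maxS σ f n) := by
  induction n with
  | zero => simpa [maxS] using measurable_const
  | succ n ih =>
    refine Measurable.max ih ?_
    exact Finset.measurable_sum _ fun k _ => hf.comp (hσ.iterate k)

lemma measurable_birkhoffSum (hσ : Measurable σ) (hf : Measurable f) (n : ℕ) :
    Measurable (birkhoffSum σ f n) :=
  Finset.measurable_sum _ fun k _ => hf.comp (hσ.iterate k)

lemma maxS_le_bound {C : ℝ} (hC : ∀ ω, |f ω| ≤ C) (n : ℕ) (ω : Ω) :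
    maxS σ f n ω ≤ n * C := by
  have hC0 : 0 ≤ C := (abs_nonneg _).trans (hC ω)
  rcases maxS_cases (σ := σ) (f := f) n ω with h | ⟨k, hk1, hkn, hke⟩
  · rw [h]; positivity
  · rw [hke]
    calc birkhoffSum σ f k ω ≤ ∑ i ∈ Finset.range k, C :=
          Finset.sum_le_sum fun i _ => (abs_le.mp (hC _)).2
      _ = k * C := by simp [mul_comm]
      _ ≤ n * C := by
          have : (k : ℝ) ≤ n := Nat.cast_le.mpr hkn
          nlinarith

lemma indicator_ge_maxS_sub (n : ℕ) (ω : Ω) :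
    maxS σ f n ω - maxS σ f n (σ ω) ≤ Set.indicator {ω | 0 < maxS σ f n ω} f ω := by
  by_cases h : 0 < maxS σ f n ω
  · rw [Set.indicator_of_mem (show ω ∈ {ω | 0 < maxS σ f n ω} from h)]
    rcases maxS_cases (σ := σ) (f := f) n ω with h0 | ⟨k, hk1, hkn, hke⟩
    · exact absurd h0 (ne_of_gt h)
    · obtain ⟨k, rfl⟩ := Nat.exists_eq_add_of_lt hk1
      rw [hke, zero_add, birkhoffSum_succ']
      have : birkhoffSum σ f k (σ ω) ≤ maxS σ f n (σ ω) :=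
        birkhoffSum_le_maxS (by omega) (σ ω)
      linarith
  · rw [Set.indicator_of_notMem (show ω ∉ {ω | 0 < maxS σ f n ω} from h)]
    have h0 : maxS σ f n ω = 0 := le_antisymm (not_lt.mp h) (maxS_nonneg n ω)
    have := maxS_nonneg (σ := σ) (f := f) n (σ ω)
    linarith

variable {μ : Measure Ω} [IsProbabilityMeasure μ]

lemma integrable_of_bound (hf : Measurable f) (C : ℝ) (hC : ∀ ω, |f ω| ≤ C) :
    Integrable f μ :=
  ⟨hf.aestronglyMeasurable, HasFiniteIntegral.of_bounded (C := C)
    (Eventually.of_forall fun ω => by simpa [Real.norm_eq_abs] using hC ω)⟩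

/-- Maximal ergodic theorem: the integral of `f` over the set where some Birkhoff sum is
positive is nonnegative. -/
lemma maximal_ergodic (hσ : MeasurePreserving σ μ μ) (hf : Measurable f)
    {C : ℝ} (hC : ∀ ω, |f ω| ≤ C) :
    0 ≤ ∫ ω, Set.indicator (⋃ n, {ω | 0 < maxS σ f n ω}) f ω ∂μ := by
  have hne : Nonempty Ω := by
    by_contra h
    rw [not_nonempty_iff] at h
    have h1 : μ Set.univ = 1 := measure_univ
    simp [Set.univ_eq_empty_iff.mpr h] at h1
  have hC0 : 0 ≤ C := (abs_nonneg _).trans (hC hne.some)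
  set E : Set Ω := ⋃ n, {ω | 0 < maxS σ f n ω} with hE
  have hUmeas : ∀ n, MeasurableSet {ω | 0 < maxS σ f n ω} := fun n =>
    measurableSet_lt measurable_const (maxS_measurable hσ.measurable hf n)
  have hEmeas : MeasurableSet E := MeasurableSet.iUnion hUmeas
  have hint_f : Integrable f μ := integrable_of_bound hf C hC
  have hint_maxS : ∀ n, Integrable (maxS σ f n) μ := fun n =>
    integrable_of_bound (maxS_measurable hσ.measurable hf n) (n * C)
      (fun ω => by
        rw [abs_of_nonneg (maxS_nonneg n ω)]
        exact maxS_le_bound hC n ω)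
  have hint_comp : ∀ n, Integrable (fun ω => maxS σ f n (σ ω)) μ := fun n =>
    integrable_of_bound ((maxS_measurable hσ.measurable hf n).comp hσ.measurable) (n * C)
      (fun ω => by
        rw [abs_of_nonneg (maxS_nonneg n _)]
        exact maxS_le_bound hC n _)
  have hint_ind : ∀ n, Integrable (Set.indicator {ω | 0 < maxS σ f n ω} f) μ := fun n =>
    integrable_of_bound (hf.indicator (hUmeas n)) C
      (fun ω => by
        calc |Set.indicator {ω | 0 < maxS σ f n ω} f ω| ≤ |f ω| := by
              simpa [Real.norm_eq_abs] using
                norm_indicator_le_norm_self (s := {ω | 0 < maxS σ f n ω}) f ω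
          _ ≤ C := hC ω)
  -- each approximant has nonnegative integral
  have hstep : ∀ n, 0 ≤ ∫ ω, Set.indicator {ω | 0 < maxS σ f n ω} f ω ∂μ := by
    intro n
    have hcomp_eq : ∫ ω, maxS σ f n (σ ω) ∂μ = ∫ ω, maxS σ f n ω ∂μ := by
      rw [← integral_map hσ.measurable.aemeasurable
        (maxS_measurable hσ.measurable hf n).aestronglyMeasurable, hσ.map_eq]
    have hmono : ∫ ω, (maxS σ f n ω - maxS σ f n (σ ω)) ∂μ
        ≤ ∫ ω, Set.indicator {ω | 0 < maxS σ f n ω} f ω ∂μ :=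
      integral_mono ((hint_maxS n).sub (hint_comp n)) (hint_ind n)
        (fun ω => indicator_ge_maxS_sub n ω)
    rwa [integral_sub (hint_maxS n) (hint_comp n), hcomp_eq, sub_self] at hmono
  -- pass to the limit
  have hlim : Tendsto (fun n => ∫ ω, Set.indicator {ω | 0 < maxS σ f n ω} f ω ∂μ)
      atTop (nhds (∫ ω, Set.indicator E f ω ∂μ)) := by
    refine tendsto_integral_of_dominated_convergence (fun _ => C)
      (fun n => (hf.indicator (hUmeas n)).aestronglyMeasurable)
      (integrable_const C) (fun n => Eventually.of_forall fun ω => ?_)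
      (Eventually.of_forall fun ω => ?_)
    · calc ‖Set.indicator {ω | 0 < maxS σ f n ω} f ω‖ ≤ ‖f ω‖ :=
            norm_indicator_le_norm_self (s := {ω | 0 < maxS σ f n ω}) f ω
        _ ≤ C := by simpa [Real.norm_eq_abs] using hC ω
    · by_cases hω : ω ∈ E
      · obtain ⟨n₀, hn₀⟩ : ∃ n₀, 0 < maxS σ f n₀ ω := by
          simpa [hE, Set.mem_iUnion] using hω
        have : ∀ n ≥ n₀, Set.indicator {ω | 0 < maxS σ f n ω} f ω = Set.indicator E f ω := by
          intro n hn
          rw [Set.indicator_of_mem (show ω ∈ {ω | 0 < maxS σ f n ω} from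
            lt_of_lt_of_le hn₀ (maxS_mono hn ω)), Set.indicator_of_mem hω]
        exact tendsto_const_nhds.congr' (eventually_atTop.mpr ⟨n₀, fun n hn => (this n hn).symm⟩)
      · have hnm : ∀ n, Set.indicator {ω | 0 < maxS σ f n ω} f ω = Set.indicator E f ω := by
          intro n
          rw [Set.indicator_of_notMem hω, Set.indicator_of_notMem]
          intro hmem
          exact hω (Set.mem_iUnion.mpr ⟨n, hmem⟩)
        exact tendsto_const_nhds.congr fun n => (hnm n).symm
  exact ge_of_tendsto hlim (Eventually.of_forall hstep)


lemma freq_shift {q q' : ℝ} (hq' : q' < q) (ω : Ω)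
    (h : ∃ᶠ n in atTop, q * n < birkhoffSum σ f n (σ ω)) :
    ∃ᶠ n in atTop, q' * n < birkhoffSum σ f n ω := by
  have hev : ∀ᶠ n : ℕ in atTop, q' - f ω ≤ (q - q') * n :=
    (Tendsto.const_mul_atTop (by linarith : (0:ℝ) < q - q')
      tendsto_natCast_atTop_atTop).eventually_ge_atTop (q' - f ω)
  have h2 := h.and_eventually hev
  rw [frequently_atTop] at h2 ⊢
  intro a
  obtain ⟨n, hn, hlt, hge⟩ := h2 a
  refine ⟨n + 1, by omega, ?_⟩
  rw [birkhoffSum_succ']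
  push_cast
  nlinarith

lemma freq_shift' {q q' : ℝ} (hq' : q' < q) (ω : Ω)
    (h : ∃ᶠ n in atTop, q * n < birkhoffSum σ f n ω) :
    ∃ᶠ n in atTop, q' * n < birkhoffSum σ f n (σ ω) := by
  have hev : ∀ᶠ n : ℕ in atTop, f ω - q ≤ (q - q') * (n - 1 : ℝ) ∧ 1 ≤ n := by
    refine ((Tendsto.const_mul_atTop (by linarith : (0:ℝ) < q - q')
      (tendsto_natCast_atTop_atTop.atTop_add tendsto_const_nhds)).eventually_ge_atTop
        (f ω - q)).and (eventually_ge_atTop 1)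
  have h2 := h.and_eventually hev
  rw [frequently_atTop] at h2 ⊢
  intro a
  obtain ⟨n, hn, hlt, hsub, h1⟩ := h2 (a + 1)
  obtain ⟨m, rfl⟩ := Nat.exists_eq_add_of_le h1
  refine ⟨m, by omega, ?_⟩
  have hS : birkhoffSum σ f (1 + m) ω = f ω + birkhoffSum σ f m (σ ω) := by
    rw [add_comm 1 m, birkhoffSum_succ']
  rw [hS] at hlt
  push_cast at hsub hlt ⊢
  nlinarith

lemma iterate_preimage_eq {B : Set Ω} (hinv : σ ⁻¹' B = B) (i : ℕ) : σ^[i] ⁻¹' B = B := by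
  induction i with
  | zero => simp
  | succ i ih => rw [Function.iterate_succ, Set.preimage_comp, ih, hinv]

lemma ae_not_freq_gt (hσ : Ergodic σ μ) (hf : Measurable f) {C : ℝ} (hC : ∀ ω, |f ω| ≤ C)
    {c : ℝ} (hc : ∫ ω, f ω ∂μ < c) :
    μ {ω | ∃ᶠ n in atTop, c * n < birkhoffSum σ f n ω} = 0 := by
  set I := ∫ ω, f ω ∂μ with hI
  set α := (I + c) / 2 with hα
  have hαI : I < α := by rw [hα]; linarith
  have hαc : α < c := by rw [hα]; linarith
  set B := {ω | ∃ q : ℚ, α < (q : ℝ) ∧ ∃ᶠ n in atTop, (q : ℝ) * n < birkhoffSum σ f n ω}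
    with hB
  have hBmeas : MeasurableSet B := by
    have : B = ⋃ (q : ℚ), ⋃ (_ : α < (q : ℝ)), ⋂ m, ⋃ n, ⋃ (_ : m ≤ n),
        {ω | (q : ℝ) * n < birkhoffSum σ f n ω} := by
      ext ω
      simp [hB, frequently_atTop]
    rw [this]
    exact MeasurableSet.iUnion fun q => MeasurableSet.iUnion fun _ =>
      MeasurableSet.iInter fun m => MeasurableSet.iUnion fun n =>
      MeasurableSet.iUnion fun _ =>
      measurableSet_lt measurable_const (measurable_birkhoffSum hσ.measurable hf n)
  have hBinv : σ ⁻¹' B = B := by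
    ext ω
    simp only [Set.mem_preimage, hB, Set.mem_setOf_eq]
    constructor
    · rintro ⟨q, hq, hfreq⟩
      obtain ⟨q', hq'1, hq'2⟩ := exists_rat_btwn hq
      exact ⟨q', hq'1, freq_shift (by exact_mod_cast hq'2) ω hfreq⟩
    · rintro ⟨q, hq, hfreq⟩
      obtain ⟨q', hq'1, hq'2⟩ := exists_rat_btwn hq
      exact ⟨q', hq'1, freq_shift' (by exact_mod_cast hq'2) ω hfreq⟩
  rcases hσ.ae_empty_or_univ hBmeas hBinv with hB0 | hB1
  · refine measure_mono_null ?_ (ae_eq_empty.mp hB0)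
    intro ω hω
    obtain ⟨q, hq1, hq2⟩ := exists_rat_btwn hαc
    refine ⟨q, hq1, hω.mono fun n hn => lt_of_le_of_lt ?_ hn⟩
    have : (0:ℝ) ≤ n := Nat.cast_nonneg n
    nlinarith
  · exfalso
    have hBae : ∀ᵐ ω ∂μ, ω ∈ B := by
      have := ae_eq_univ.mp hB1
      rw [ae_iff]
      exact this
    set g : Ω → ℝ := Set.indicator B (fun ω => f ω - α) with hg
    have hgmeas : Measurable g := (hf.sub measurable_const).indicator hBmeas
    have hgbound : ∀ ω, |g ω| ≤ C + |α| := by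
      intro ω
      calc |g ω| ≤ |f ω - α| := by
            simpa [Real.norm_eq_abs] using norm_indicator_le_norm_self
              (s := B) (fun ω => f ω - α) ω
        _ ≤ |f ω| + |α| := abs_sub _ _
        _ ≤ C + |α| := by linarith [hC ω]
    -- Birkhoff sums of g
    have hSg_mem : ∀ ω ∈ B, ∀ n, birkhoffSum σ g n ω = birkhoffSum σ f n ω - n * α := by
      intro ω hω n
      have h1 : ∀ i, g (σ^[i] ω) = f (σ^[i] ω) - α := by
        intro i
        have hmem : σ^[i] ω ∈ B := by
          rw [← iterate_preimage_eq hBinv i] at hω; exact hω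
        rw [hg, Set.indicator_of_mem hmem]
      unfold birkhoffSum
      rw [Finset.sum_congr rfl fun i _ => h1 i, Finset.sum_sub_distrib,
        Finset.sum_const, Finset.card_range, nsmul_eq_mul]
    have hSg_nmem : ∀ ω ∉ B, ∀ n, birkhoffSum σ g n ω = 0 := by
      intro ω hω n
      unfold birkhoffSum
      refine Finset.sum_eq_zero fun i _ => ?_
      have : σ^[i] ω ∉ B := fun hmem => hω (by
        rw [← iterate_preimage_eq hBinv i]; exact hmem)
      simp [hg, Set.indicator_of_notMem this]
    have hE : (⋃ n, {ω | 0 < maxS σ g n ω}) = B := by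
      ext ω
      simp only [Set.mem_iUnion, Set.mem_setOf_eq]
      constructor
      · rintro ⟨n, hn⟩
        by_contra hω
        rcases maxS_cases (σ := σ) (f := g) n ω with h0 | ⟨k, _, _, hke⟩
        · rw [h0] at hn; exact lt_irrefl _ hn
        · rw [hke, hSg_nmem ω hω k] at hn; exact lt_irrefl _ hn
      · rintro hω
        obtain ⟨q, hq, hfreq⟩ := id hω
        obtain ⟨n, hn1, hnq⟩ := (hfreq.and_eventually (eventually_ge_atTop 1)).exists
        refine ⟨n, lt_of_lt_of_le ?_ (birkhoffSum_le_maxS le_rfl ω)⟩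
        rw [hSg_mem ω hω n]
        have h1 : (1:ℝ) ≤ n := by exact_mod_cast hnq
        nlinarith [hn1]
    have hmax := maximal_ergodic (μ := μ) hσ.toMeasurePreserving hgmeas hgbound
    rw [hE] at hmax
    have hind : Set.indicator B g = g := by
      funext ω
      by_cases hω : ω ∈ B
      · rw [Set.indicator_of_mem hω]
      · rw [Set.indicator_of_notMem hω, hg, Set.indicator_of_notMem hω]
    rw [hind] at hmax
    have hgae : g =ᵐ[μ] fun ω => f ω - α := by
      filter_upwards [hBae] with ω hω
      rw [hg, Set.indicator_of_mem hω]
    rw [integral_congr_ae hgae, integral_sub (integrable_of_bound hf C hC)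
      (integrable_const α), integral_const] at hmax
    simp only [measure_univ, probReal_univ, ENNReal.toReal_one, smul_eq_mul, one_mul] at hmax
    rw [← hI] at hmax
    linarith

lemma birkhoffSum_neg' (n : ℕ) (ω : Ω) :
    birkhoffSum σ (fun ω => -f ω) n ω = -birkhoffSum σ f n ω := by
  unfold birkhoffSum
  rw [← Finset.sum_neg_distrib]

/-- Birkhoff pointwise ergodic theorem for bounded measurable functions. -/
theorem birkhoff_ae (hσ : Ergodic σ μ) (hf : Measurable f) {C : ℝ} (hC : ∀ ω, |f ω| ≤ C) :
    ∀ᵐ ω ∂μ, Tendsto (fun n => birkhoffSum σ f n ω / n) atTop (nhds (∫ ω, f ω ∂μ)) := by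
  set I := ∫ ω, f ω ∂μ with hI
  have hInt_neg : ∫ ω, -f ω ∂μ = -I := by rw [integral_neg]
  have h1 : ∀ j : ℕ, ∀ᵐ ω ∂μ, ¬ (∃ᶠ n in atTop,
      (I + 1 / (j + 1)) * n < birkhoffSum σ f n ω) := by
    intro j
    have hz := ae_not_freq_gt (μ := μ) hσ hf hC
      (c := I + 1 / (j + 1))
      (by have : (0:ℝ) < 1 / ((j:ℝ) + 1) := by positivity
          rw [← hI]; linarith)
    rw [ae_iff]
    simpa only [not_not] using hz
  have h2 : ∀ j : ℕ, ∀ᵐ ω ∂μ, ¬ (∃ᶠ n in atTop,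
      (-I + 1 / (j + 1)) * n < -birkhoffSum σ f n ω) := by
    intro j
    have hz := ae_not_freq_gt (μ := μ) (f := fun ω => -f ω) hσ hf.neg
      (C := C) (fun ω => by simpa using hC ω)
      (c := -I + 1 / (j + 1))
      (by have : (0:ℝ) < 1 / ((j:ℝ) + 1) := by positivity
          rw [hInt_neg]; linarith)
    rw [ae_iff]
    simp only [not_not]
    convert hz using 3 with ω
    simp [birkhoffSum_neg']
  filter_upwards [(ae_all_iff).mpr h1, (ae_all_iff).mpr h2] with ω hup hdown
  rw [Metric.tendsto_atTop]
  intro ε hε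
  obtain ⟨j, hj⟩ := exists_nat_one_div_lt hε
  have e1 : ∀ᶠ n : ℕ in atTop, birkhoffSum σ f n ω ≤ (I + 1 / (j + 1)) * n := by
    have := not_frequently.mp (hup j)
    filter_upwards [this] with n hn
    exact not_lt.mp hn
  have e2 : ∀ᶠ n : ℕ in atTop, -birkhoffSum σ f n ω ≤ (-I + 1 / (j + 1)) * n := by
    have := not_frequently.mp (hdown j)
    filter_upwards [this] with n hn
    exact not_lt.mp hn
  obtain ⟨N, hN⟩ := eventually_atTop.mp (e1.and (e2.and (eventually_ge_atTop 1)))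
  refine ⟨N, fun n hn => ?_⟩
  obtain ⟨hu, hd, h1n⟩ := hN n hn
  have hn0 : (0:ℝ) < n := by exact_mod_cast h1n
  have hδ : (1:ℝ) / (j + 1) < ε := by exact_mod_cast hj
  rw [Real.dist_eq, abs_lt]
  have hxn : birkhoffSum σ f n ω = birkhoffSum σ f n ω / n * n :=
    (div_mul_cancel₀ _ (ne_of_gt hn0)).symm
  rw [hxn] at hu hd
  constructor
  · nlinarith
  · nlinarith

end Birkhoff

/-- If `σ` is an ergodic measure-preserving transformation of a probability space, `A` is a
measurable set, and `0 < e₁ < 1/2`, then for almost every `ω` the proportion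
`(1/N) · #{n : e₁·N ≤ n ≤ (1−e₁)·N and σⁿ(ω) ∈ A}` converges to `(1 − 2e₁)·μ(A)`. -/
theorem ae_window_frequency_tendsto {Ω : Type*} [MeasurableSpace Ω]
    (μ : Measure Ω) [IsProbabilityMeasure μ] (σ : Ω → Ω) (hσ : Ergodic σ μ)
    (A : Set Ω) (hA : MeasurableSet A)
    (e₁ : ℝ) (he₁ : 0 < e₁) (he₁' : e₁ < 1 / 2) :
    ∀ᵐ ω ∂μ, Tendsto
      (fun N : ℕ =>
        (({n : ℕ | e₁ * N ≤ (n : ℝ) ∧ (n : ℝ) ≤ (1 - e₁) * N ∧ σ^[n] ω ∈ A}.ncard : ℝ))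
          / N)
      atTop (nhds ((1 - 2 * e₁) * (μ A).toReal)) := by
  classical
  set f : Ω → ℝ := Set.indicator A (fun _ => (1:ℝ)) with hfdef
  have hf : Measurable f := measurable_const.indicator hA
  have hfb : ∀ ω, |f ω| ≤ 1 := fun ω => by
    by_cases h : ω ∈ A <;> simp [hfdef, Set.indicator_of_mem, Set.indicator_of_notMem, h]
  have hint : ∫ ω, f ω ∂μ = (μ A).toReal := by
    rw [hfdef, integral_indicator_const _ hA]
    simp
    rfl
  set c := (μ A).toReal with hc
  have hbk := birkhoff_ae (μ := μ) hσ hf hfb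
  rw [hint] at hbk
  -- window index functions
  set kN : ℕ → ℕ := fun N => ⌈e₁ * N⌉₊ with hkN
  set mN : ℕ → ℕ := fun N => ⌊(1 - e₁) * N⌋₊ + 1 with hmN
  have he2 : 0 < 1 - e₁ := by linarith
  have htk : Tendsto kN atTop atTop := by
    rw [tendsto_atTop]
    intro b
    have hev : ∀ᶠ N : ℕ in atTop, (b : ℝ) ≤ e₁ * N :=
      (Tendsto.const_mul_atTop he₁ tendsto_natCast_atTop_atTop).eventually_ge_atTop b
    filter_upwards [hev] with N hN
    exact_mod_cast Nat.cast_le.mp (hN.trans (Nat.le_ceil _))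
  have htm : Tendsto mN atTop atTop := by
    rw [tendsto_atTop]
    intro b
    have hev : ∀ᶠ N : ℕ in atTop, (b : ℝ) ≤ (1 - e₁) * N :=
      (Tendsto.const_mul_atTop he2 tendsto_natCast_atTop_atTop).eventually_ge_atTop b
    filter_upwards [hev] with N hN
    exact le_trans (Nat.le_floor hN) (Nat.le_succ _)
  have hkr : Tendsto (fun N : ℕ => (kN N : ℝ) / N) atTop (nhds e₁) := by
    have hupper : Tendsto (fun N : ℕ => e₁ + 1 / (N:ℝ)) atTop (nhds e₁) := by
      simpa using (tendsto_const_nhds (x := e₁)).add tendsto_one_div_atTop_nhds_zero_nat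
    refine tendsto_of_tendsto_of_tendsto_of_le_of_le' tendsto_const_nhds hupper ?_ ?_
    · filter_upwards [eventually_ge_atTop 1] with N hN
      have hN0 : (0:ℝ) < N := by exact_mod_cast hN
      rw [le_div_iff₀ hN0]
      exact le_trans (by ring_nf; exact le_rfl) (Nat.le_ceil (e₁ * N))
    · filter_upwards [eventually_ge_atTop 1] with N hN
      have hN0 : (0:ℝ) < N := by exact_mod_cast hN
      rw [div_le_iff₀ hN0]
      have := Nat.ceil_lt_add_one (by positivity : (0:ℝ) ≤ e₁ * N)
      have h2 : (e₁ + 1 / N) * N = e₁ * N + 1 := by field_simp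
      rw [h2]
      linarith
  have hmr : Tendsto (fun N : ℕ => (mN N : ℝ) / N) atTop (nhds (1 - e₁)) := by
    have hupper : Tendsto (fun N : ℕ => (1 - e₁) + 1 / (N:ℝ)) atTop (nhds (1 - e₁)) := by
      simpa using (tendsto_const_nhds (x := 1 - e₁)).add tendsto_one_div_atTop_nhds_zero_nat
    refine tendsto_of_tendsto_of_tendsto_of_le_of_le' tendsto_const_nhds hupper ?_ ?_
    · filter_upwards [eventually_ge_atTop 1] with N hN
      have hN0 : (0:ℝ) < N := by exact_mod_cast hN
      rw [le_div_iff₀ hN0]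
      have := Nat.lt_floor_add_one ((1 - e₁) * N)
      have hcast : ((mN N : ℝ)) = (⌊(1 - e₁) * N⌋₊ : ℝ) + 1 := by
        rw [hmN]; push_cast; ring
      rw [hcast]
      linarith
    · filter_upwards [eventually_ge_atTop 1] with N hN
      have hN0 : (0:ℝ) < N := by exact_mod_cast hN
      rw [div_le_iff₀ hN0]
      have hfl : (⌊(1 - e₁) * N⌋₊ : ℝ) ≤ (1 - e₁) * N :=
        Nat.floor_le (by positivity)
      have hcast : ((mN N : ℝ)) = (⌊(1 - e₁) * N⌋₊ : ℝ) + 1 := by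
        rw [hmN]; push_cast; ring
      have h2 : ((1 - e₁) + 1 / N) * N = (1 - e₁) * N + 1 := by field_simp
      rw [hcast, h2]
      linarith
  filter_upwards [hbk] with ω hω
  set B : ℕ → ℕ := fun j => ((Finset.range j).filter fun i => σ^[i] ω ∈ A).card with hBdef
  have hSB : ∀ j, birkhoffSum σ f j ω = (B j : ℝ) := by
    intro j
    rw [hBdef]
    unfold birkhoffSum
    rw [← Finset.sum_boole]
    refine Finset.sum_congr rfl fun i _ => ?_
    by_cases h : σ^[i] ω ∈ A <;>
      simp [hfdef, Set.indicator_of_mem, Set.indicator_of_notMem, h]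
  have hBtend : Tendsto (fun j => (B j : ℝ) / j) atTop (nhds c) := by
    refine hω.congr fun j => ?_
    rw [hSB j]
  have hBmono : ∀ {i j : ℕ}, i ≤ j → B i ≤ B j := by
    intro i j hij
    exact Finset.card_le_card (Finset.filter_subset_filter _
      (Finset.range_subset_range.mpr hij))
  -- limits of the two pieces
  have hm1 : Tendsto (fun N => (B (mN N) : ℝ) / N) atTop (nhds (c * (1 - e₁))) := by
    have h1 : Tendsto (fun N => (B (mN N) : ℝ) / (mN N)) atTop (nhds c) :=
      hBtend.comp htm
    have := h1.mul hmr
    refine this.congr fun N => ?_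
    have hm0 : (mN N : ℝ) ≠ 0 := by
      rw [hmN]; push_cast; positivity
    field_simp
  have hk1 : Tendsto (fun N => (B (kN N) : ℝ) / N) atTop (nhds (c * e₁)) := by
    have h1 : Tendsto (fun N => (B (kN N) : ℝ) / (kN N)) atTop (nhds c) :=
      hBtend.comp htk
    have h2 := h1.mul hkr
    refine h2.congr' ?_
    filter_upwards [htk.eventually_ge_atTop 1] with N hN
    have hk0 : (kN N : ℝ) ≠ 0 := by
      have : (1:ℝ) ≤ (kN N : ℝ) := by exact_mod_cast hN
      linarith
    field_simp
  have hfinal := hm1.sub hk1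
  have heq : c * (1 - e₁) - c * e₁ = (1 - 2 * e₁) * c := by ring
  rw [heq] at hfinal
  refine hfinal.congr' ?_
  filter_upwards [eventually_ge_atTop 1] with N hN
  have hN0 : (0:ℝ) < N := by exact_mod_cast hN
  -- identify the window count
  have hsub : e₁ * N ≤ (1 - e₁) * N := by nlinarith
  have hkle : kN N ≤ ⌊(1 - e₁) * N⌋₊ + 1 := by
    rw [hkN]
    calc ⌈e₁ * N⌉₊ ≤ ⌈(1 - e₁) * N⌉₊ := Nat.ceil_le_ceil hsub
      _ ≤ ⌊(1 - e₁) * N⌋₊ + 1 := Nat.ceil_le_floor_add_one _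
  have hset : {n : ℕ | e₁ * N ≤ (n : ℝ) ∧ (n : ℝ) ≤ (1 - e₁) * N ∧ σ^[n] ω ∈ A}
      = ↑((Finset.Icc (kN N) ⌊(1 - e₁) * N⌋₊).filter fun n => σ^[n] ω ∈ A) := by
    ext n
    simp only [Set.mem_setOf_eq, Finset.coe_filter, Finset.mem_Icc, Set.mem_setOf_eq]
    constructor
    · rintro ⟨h1, h2, h3⟩
      exact ⟨⟨Nat.ceil_le.mpr h1, Nat.le_floor h2⟩, h3⟩
    · rintro ⟨⟨h1, h2⟩, h3⟩
      refine ⟨Nat.ceil_le.mp h1, ?_, h3⟩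
      exact le_trans (Nat.cast_le.mpr h2) (Nat.floor_le (by positivity))
  have hIcc : Finset.Icc (kN N) ⌊(1 - e₁) * N⌋₊
      = Finset.range (⌊(1 - e₁) * N⌋₊ + 1) \ Finset.range (kN N) := by
    ext i
    simp only [Finset.mem_Icc, Finset.mem_sdiff, Finset.mem_range]
    omega
  have hcard : ((Finset.Icc (kN N) ⌊(1 - e₁) * N⌋₊).filter fun n => σ^[n] ω ∈ A).card
      = B (⌊(1 - e₁) * N⌋₊ + 1) - B (kN N) := by
    rw [hIcc]
    have hfe : (Finset.range (⌊(1 - e₁) * N⌋₊ + 1) \ Finset.range (kN N)).filter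
          (fun n => σ^[n] ω ∈ A)
        = (Finset.range (⌊(1 - e₁) * N⌋₊ + 1)).filter (fun n => σ^[n] ω ∈ A)
          \ (Finset.range (kN N)).filter (fun n => σ^[n] ω ∈ A) := by
      ext i
      simp only [Finset.mem_filter, Finset.mem_sdiff]
      tauto
    rw [hfe, Finset.card_sdiff_of_subset]
    exact Finset.filter_subset_filter _ (Finset.range_subset_range.mpr hkle)
  rw [hset, Set.ncard_coe_finset, hcard]
  have hle : B (kN N) ≤ B (⌊(1 - e₁) * N⌋₊ + 1) := hBmono hkle
  rw [Nat.cast_sub hle]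
  have : mN N = ⌊(1 - e₁) * N⌋₊ + 1 := rfl
  rw [← this, sub_div]
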